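/- For an l-Grigorchuk subshift and k ≡ 2 (mod 4) with η|_k η|_k ∈ L(η), one has η|_k = (a,x)^{k/2} and Q(η|_k) = ⌊(2^{l_1+2} − 2)/k⌋. -/

import Mathlib

open Filter ENNReal

/-- The left shift on infinite words. -/
def shft {A : Type*} (y : ℕ → A) : ℕ → A := fun n => y (n + 1)

/-- `w` occurs as a factor of the infinite word `y`. -/
def FactorOf {A : Type*} (w : List A) (y : ℕ → A) : Prop :=
  ∃ k, w = (List.range w.length).map fun i => y (k + i)

/-- The language of a subshift `Y`: all finite factors of elements of `Y`. -/
def LangOf {A : Type*} (Y : Set (ℕ → A)) : Set (List A) :=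
  {w | ∃ y ∈ Y, FactorOf w y}

/-- The language of an infinite word `x`: all finite factors of `x`
(equals the language of the subshift `Ω(x)` generated by `x`). -/
def LangX {A : Type*} (x : ℕ → A) : Set (List A) :=
  {w | FactorOf w x}

/-- A subshift: a closed, shift-invariant set of infinite words. -/
def IsSubshift {A : Type*} [TopologicalSpace A] (Y : Set (ℕ → A)) : Prop :=
  IsClosed Y ∧ shft '' Y = Y

/-- The subshift generated by an infinite word `x`: the closure of its shift orbit. -/
def OmegaOf {A : Type*} [TopologicalSpace A] (x : ℕ → A) : Set (ℕ → A) :=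
  closure {y | ∃ k, y = shft^[k] x}

/-- `Y` is aperiodic: it contains no periodic point. -/
def Aperiodic {A : Type*} (Y : Set (ℕ → A)) : Prop :=
  ¬ ∃ y ∈ Y, ∃ k, 0 < k ∧ shft^[k] y = y

/-- `Q(n)`: the supremum of the powers `p` such that some word `W` of length `n`
in the language `L` has `W^p ∈ L`. -/
noncomputable def QfunL {A : Type*} (L : Set (List A)) (n : ℕ) : ℕ∞ :=
  sSup ((fun q : ℕ => (q : ℕ∞)) ''
    {q | ∃ W ∈ L, W.length = n ∧ (List.replicate q W).flatten ∈ L})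

/-- The repetitive function `R(n)`: the smallest `r'` such that every word of
length `r'` in `L` contains all words of `L` of length `n` as factors
(`⊤` if no such `r'` exists). -/
noncomputable def RfunL {A : Type*} (L : Set (List A)) (n : ℕ) : ℕ∞ :=
  sInf ((fun r : ℕ => (r : ℕ∞)) ''
    {r' | ∀ u ∈ L, u.length = r' → ∀ v ∈ L, v.length = n → v <:+: u})

/-- `Q_α = limsup Q(n)/n^(α-1)`. -/
noncomputable def Qalpha {A : Type*} (L : Set (List A)) (α : ℝ) : ℝ≥0∞ :=
  Filter.atTop.limsup fun n : ℕ => (QfunL L n : ℝ≥0∞) / (n : ℝ≥0∞) ^ (α - 1)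

/-- `R_α = limsup R(n)/n^α`. -/
noncomputable def Ralpha {A : Type*} (L : Set (List A)) (α : ℝ) : ℝ≥0∞ :=
  Filter.atTop.limsup fun n : ℕ => (RfunL L n : ℝ≥0∞) / (n : ℝ≥0∞) ^ α

/-- `A_{α,n}`: the infimum of `(|W|-|w|)/|w|^(1/α)` over `w, W` in the language with
`w` a proper nonempty prefix and suffix of `W` and `|W| = n`. -/
noncomputable def AfunL {A : Type*} (L : Set (List A)) (α : ℝ) (n : ℕ) : ℝ≥0∞ :=
  sInf {t | ∃ w W : List A, w ∈ L ∧ W ∈ L ∧ w ≠ [] ∧ w ≠ W ∧ w <+: W ∧ w <:+ W ∧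
    W.length = n ∧ t = ((W.length - w.length : ℕ) : ℝ≥0∞) / (w.length : ℝ≥0∞) ^ (1 / α)}

/-- `ℓ_α = liminf_n A_{α,n}`. -/
noncomputable def lalpha {A : Type*} (L : Set (List A)) (α : ℝ) : ℝ≥0∞ :=
  Filter.atTop.liminf (AfunL L α)

/-- `ℓ`: the repulsiveness constant (no restriction on `|W|`). -/
noncomputable def lconst {A : Type*} (L : Set (List A)) : ℝ≥0∞ :=
  sInf {t | ∃ w W : List A, w ∈ L ∧ W ∈ L ∧ w ≠ [] ∧ w ≠ W ∧ w <+: W ∧ w <:+ W ∧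
    t = ((W.length - w.length : ℕ) : ℝ≥0∞) / (w.length : ℝ≥0∞)}

/-- The four-letter alphabet `{a, x, y, z}` of the Grigorchuk subshift. -/
inductive GW : Type
  | a : GW
  | x : GW
  | y : GW
  | z : GW
  deriving DecidableEq

instance : Fintype GW :=
  ⟨⟨{GW.a, GW.x, GW.y, GW.z}, by decide⟩, fun c => by cases c <;> decide⟩

instance : TopologicalSpace GW := ⊥
instance : DiscreteTopology GW := ⟨rfl⟩
/-- The substitution `τ_b` on letters: `a ↦ (a, b, a)`, fixing the other letters. -/
def tauL (b : GW) : GW → List GW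
  | GW.a => [GW.a, b, GW.a]
  | c => [c]

/-- The substitution `τ_b` on words (monoid homomorphism). -/
def tauW (b : GW) (w : List GW) : List GW := w.flatMap (tauL b)

/-- For a sequence `l` (0-indexed: `l i` is `l_{i+1}` of the paper), `Nblk l j` is
the index of the block containing position `j`, i.e. the unique `n` with
`l 0 + ⋯ + l (n-1) ≤ j < l 0 + ⋯ + l n`;  this is `N(j) - 1` in the paper. -/
noncomputable def Nblk (l : ℕ → ℕ) (j : ℕ) : ℕ :=
  sInf {n : ℕ | j < ∑ i ∈ Finset.range (n + 1), l i}

/-- `q(j)` of the paper: `j` minus the sum of the lengths of the complete blocks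
before position `j`. -/
noncomputable def qrem (l : ℕ → ℕ) (j : ℕ) : ℕ :=
  j - ∑ i ∈ Finset.range (Nblk l j), l i

/-- The letter inserted at step `j + 1`: the blocks use `x, y, z` cyclically. -/
noncomputable def letterAt (l : ℕ → ℕ) (j : ℕ) : GW :=
  match (Nblk l j) % 3 with
  | 0 => GW.x
  | 1 => GW.y
  | _ => GW.z

/-- `gword l j = τ^{(j)}(a)`, via the recursion
`τ^{(j+1)}(a) = τ^{(j)}(a) β τ^{(j)}(a)` with `β = letterAt l j`. -/
noncomputable def gword (l : ℕ → ℕ) : ℕ → List GW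
  | 0 => [GW.a]
  | j + 1 => gword l j ++ letterAt l j :: gword l j

/-- The `l`-Grigorchuk word `η_l`: the unique infinite word having every
`τ^{(j)}(a)` as a prefix. -/
noncomputable def etaG (l : ℕ → ℕ) (n : ℕ) : GW :=
  (gword l (n + 1)).getD n GW.a

/-- The language of the `l`-Grigorchuk subshift: all factors of `η_l`. -/
noncomputable def LangG (l : ℕ → ℕ) : Set (List GW) := LangX (etaG l)

/-- The prefix of `η_l` of length `k`. -/
noncomputable def prefEta (l : ℕ → ℕ) (k : ℕ) : List GW :=
  (List.range k).map (etaG l)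


/-! ### Auxiliary: 2-adic valuation -/

private def v2 : ℕ → ℕ
  | 0 => 0
  | n+1 => if (n+1) % 2 = 0 then v2 ((n+1)/2) + 1 else 0
decreasing_by exact Nat.div_lt_self (Nat.succ_pos _) one_lt_two

private lemma v2_odd {n : ℕ} (h : n % 2 = 1) : v2 n = 0 := by
  cases n with
  | zero => simp at h
  | succ m => rw [v2]; simp [h]

private lemma v2_two_mul {n : ℕ} (h : 0 < n) : v2 (2 * n) = v2 n + 1 := by
  obtain ⟨m, rfl⟩ := Nat.exists_eq_succ_of_ne_zero h.ne'
  have e : 2 * (m + 1) = (2 * m + 1) + 1 := by ring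
  rw [e, v2]
  have h2 : (2 * m + 1 + 1) % 2 = 0 := by omega
  have h3 : (2 * m + 1 + 1) / 2 = m + 1 := by omega
  rw [if_pos h2, h3]

private lemma v2_pow_mul_odd (v q : ℕ) : v2 (2 ^ v * (2 * q + 1)) = v := by
  induction v with
  | zero => simpa using v2_odd (by omega)
  | succ w ih =>
    have e : 2 ^ (w + 1) * (2 * q + 1) = 2 * (2 ^ w * (2 * q + 1)) := by ring
    rw [e, v2_two_mul (by positivity), ih]

private lemma not_succ_pow_dvd (w q : ℕ) : ¬ 2 ^ (w + 1) ∣ 2 ^ w * (2 * q + 1) := by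
  rintro ⟨c, hc⟩
  rw [pow_succ] at hc
  have : 2 * q + 1 = 2 * c := Nat.eq_of_mul_eq_mul_left (pow_pos two_pos w)
    (by rw [hc]; ring)
  omega

private lemma v2_decomp {n : ℕ} (h : 0 < n) : ∃ q, n = 2 ^ (v2 n) * (2 * q + 1) := by
  induction n using Nat.strong_induction_on with
  | _ n ih =>
    rcases Nat.even_or_odd n with he | ho
    · obtain ⟨m, hm2⟩ := he
      have h2m : n = 2 * m := by omega
      have hm : 0 < m := by omega
      obtain ⟨q, hq⟩ := ih m (by omega) hm
      refine ⟨q, ?_⟩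
      rw [h2m, v2_two_mul hm, pow_succ]
      calc 2 * m = 2 * (2 ^ (v2 m) * (2 * q + 1)) := by rw [← hq]
        _ = 2 ^ (v2 m) * 2 * (2 * q + 1) := by ring
    · obtain ⟨q, rfl⟩ := ho
      exact ⟨q, by rw [v2_odd (by omega)]; ring⟩

private lemma v2_eq_iff {n v : ℕ} (h : 0 < n) :
    v2 n = v ↔ (2 ^ v ∣ n ∧ ¬ 2 ^ (v+1) ∣ n) := by
  obtain ⟨q, hq⟩ := v2_decomp h
  generalize hw : v2 n = w at hq
  constructor
  · rintro rfl
    exact ⟨⟨2 * q + 1, hq⟩, by rw [hq]; exact not_succ_pow_dvd w q⟩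
  · rintro ⟨h1, h2⟩
    by_contra hne
    rcases Nat.lt_or_ge w v with hlt | hge
    · exact (by rw [hq]; exact not_succ_pow_dvd w q : ¬ 2 ^ (w+1) ∣ n)
        (dvd_trans (pow_dvd_pow 2 hlt) h1)
    · have hgt : v < w := lt_of_le_of_ne hge (Ne.symm hne)
      exact h2 (dvd_trans (pow_dvd_pow 2 hgt) ⟨2 * q + 1, hq⟩)

private lemma v2_lt_of_lt_pow {d L : ℕ} (hd : 0 < d) (h : d < 2 ^ L) : v2 d < L := by
  have h1 : 2 ^ (v2 d) ∣ d := ((v2_eq_iff hd).mp rfl).1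
  have := Nat.le_of_dvd hd h1
  exact (Nat.pow_lt_pow_iff_right (a := 2) one_lt_two).mp (lt_of_le_of_lt this h)

private lemma v2_pow_self (j : ℕ) : v2 (2 ^ j) = j := by
  simpa using v2_pow_mul_odd j 0

private lemma v2_pow_add {r j : ℕ} (h0 : 0 < r) (h : r < 2 ^ j) :
    v2 (2 ^ j + r) = v2 r := by
  have hv : v2 r < j := v2_lt_of_lt_pow h0 h
  obtain ⟨h1, h2⟩ := (v2_eq_iff h0).mp rfl
  refine (v2_eq_iff (by positivity)).mpr
    ⟨Nat.dvd_add (pow_dvd_pow 2 hv.le) h1, fun hd => ?_⟩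
  exact h2 ((Nat.dvd_add_right (pow_dvd_pow 2 hv)).mp hd)

private lemma v2_pow_sub {d j : ℕ} (h0 : 0 < d) (h : d < 2 ^ j) :
    v2 (2 ^ j - d) = v2 d := by
  have hv : v2 d < j := v2_lt_of_lt_pow h0 h
  obtain ⟨h1, h2⟩ := (v2_eq_iff h0).mp rfl
  refine (v2_eq_iff (by omega)).mpr
    ⟨Nat.dvd_sub (pow_dvd_pow 2 hv.le) h1, fun hd => ?_⟩
  have e : 2 ^ j - (2 ^ j - d) = d := by omega
  have hdd : 2 ^ (v2 d + 1) ∣ 2 ^ j - (2 ^ j - d) :=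
    Nat.dvd_sub (pow_dvd_pow 2 hv) hd
  rw [e] at hdd
  exact h2 hdd

/-! ### Auxiliary: the letters of the Grigorchuk word -/

private lemma letterAt_of_lt {l : ℕ → ℕ} {j : ℕ} (h : j < l 0) : letterAt l j = GW.x := by
  have h0 : Nblk l j = 0 :=
    Nat.sInf_eq_zero.mpr (Or.inl (by simpa [Finset.sum_range_one] using h))
  simp [letterAt, h0]

private lemma letterAt_l0 {l : ℕ → ℕ} (hl : ∀ i, 0 < l i) : letterAt l (l 0) = GW.y := by
  have h1 : 1 ∈ {n : ℕ | l 0 < ∑ i ∈ Finset.range (n + 1), l i} := by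
    simp only [Set.mem_setOf_eq, Finset.sum_range_succ, Finset.sum_range_one]
    have := hl 1; omega
  have h0 : 0 ∉ {n : ℕ | l 0 < ∑ i ∈ Finset.range (n + 1), l i} := by
    simp [Finset.sum_range_one]
  have : Nblk l (l 0) = 1 := by
    refine le_antisymm (Nat.sInf_le h1) ?_
    rcases Nat.eq_zero_or_pos (Nblk l (l 0)) with h | h
    · have hmem : Nblk l (l 0) ∈ {n : ℕ | l 0 < ∑ i ∈ Finset.range (n + 1), l i} :=
        Nat.sInf_mem ⟨1, h1⟩
      rw [h] at hmem
      exact absurd hmem h0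
    · exact h
  simp [letterAt, this]

private lemma letterAt_j0 {l : ℕ → ℕ} (hl : ∀ i, 0 < l i) :
    letterAt l (l 0 + l 1 + l 2) = GW.x := by
  set j0 := l 0 + l 1 + l 2 with hj0
  have h3 : 3 ∈ {n : ℕ | j0 < ∑ i ∈ Finset.range (n + 1), l i} := by
    simp only [Set.mem_setOf_eq, Finset.sum_range_succ, Finset.sum_range_one]
    have := hl 3; omega
  have : Nblk l j0 = 3 := by
    refine le_antisymm (Nat.sInf_le h3) ?_
    by_contra h
    have hmem : Nblk l j0 ∈ {n : ℕ | j0 < ∑ i ∈ Finset.range (n + 1), l i} :=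
      Nat.sInf_mem ⟨3, h3⟩
    set m := Nblk l j0 with hm
    have hm2 : m ≤ 2 := by omega
    have h4 : j0 < ∑ i ∈ Finset.range (m + 1), l i := hmem
    have hle : ∑ i ∈ Finset.range (m + 1), l i ≤ ∑ i ∈ Finset.range 3, l i :=
      Finset.sum_le_sum_of_subset (Finset.range_subset_range.mpr (by omega))
    have h5 : j0 < ∑ i ∈ Finset.range 3, l i := lt_of_lt_of_le h4 hle
    simp only [Finset.sum_range_succ, Finset.sum_range_zero, Finset.sum_range_one] at h5
    omega
  simp [letterAt, this]

private lemma letterAt_ne_a {l : ℕ → ℕ} (j : ℕ) : letterAt l j ≠ GW.a := by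
  simp only [letterAt]
  split <;> simp

/-! ### Auxiliary: structure of the Grigorchuk word -/

private lemma gword_length (l : ℕ → ℕ) (j : ℕ) : (gword l j).length = 2 ^ (j + 1) - 1 := by
  induction j with
  | zero => simp [gword]
  | succ j ih =>
    have h1 : 0 < 2 ^ (j + 1) := pow_pos two_pos _
    simp [gword, ih, pow_succ]
    omega

private lemma gword_getD (l : ℕ → ℕ) (j n : ℕ) (hn : n < 2 ^ (j + 1) - 1) :
    (gword l j).getD n GW.a = if n % 2 = 0 then GW.a else letterAt l (v2 ((n + 1) / 2)) := by
  induction j generalizing n with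
  | zero =>
    interval_cases n
    simp [gword]
  | succ j ih =>
    have hL : (gword l j).length = 2 ^ (j + 1) - 1 := gword_length l j
    have h1 : 0 < 2 ^ (j + 1) := pow_pos two_pos _
    have h2 : 2 ^ (j + 2) = 2 * 2 ^ (j + 1) := by rw [pow_succ]; ring
    rcases lt_trichotomy n (2 ^ (j + 1) - 1) with hlt | heq | hgt
    · rw [gword, List.getD_append _ _ _ _ (by omega)]
      exact ih n hlt
    · subst heq
      rw [gword, List.getD_append_right _ _ _ _ (by omega)]
      rw [hL, Nat.sub_self]
      simp only [List.getD_cons_zero]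
      have hodd : (2 ^ (j + 1) - 1) % 2 = 1 := by omega
      have hdiv : ((2 ^ (j + 1) - 1) + 1) / 2 = 2 ^ j := by
        have : 2 ^ (j+1) = 2 * 2 ^ j := by rw [pow_succ]; ring
        omega
      rw [if_neg (by omega), hdiv, v2_pow_self]
    · rw [gword, List.getD_append_right _ _ _ _ (by omega), hL]
      have hm : n - (2 ^ (j + 1) - 1) = (n - 2 ^ (j + 1)) + 1 := by omega
      rw [hm, List.getD_cons_succ]
      set m := n - 2 ^ (j + 1) with hmdef
      have hmlt : m < 2 ^ (j + 1) - 1 := by omega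
      have hn2 : n = 2 ^ (j + 1) + m := by omega
      rw [ih m hmlt]
      have hpar : n % 2 = m % 2 := by omega
      rcases Nat.even_or_odd m with he | ho
      · have hme := Nat.even_iff.mp he
        rw [if_pos (by omega), if_pos (by omega)]
      · have hmo : m % 2 = 1 := Nat.odd_iff.mp ho
        rw [if_neg (by omega), if_neg (by omega)]
        congr 1
        have e : (n + 1) / 2 = 2 ^ j + (m + 1) / 2 := by
          have : 2 ^ (j+1) = 2 * 2 ^ j := by rw [pow_succ]; ring
          omega
        rw [e, v2_pow_add (by omega) (by
          have : 2 ^ (j+1) = 2 * 2 ^ j := by rw [pow_succ]; ring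
          omega)]

private lemma etaG_eq (l : ℕ → ℕ) (n : ℕ) :
    etaG l n = if n % 2 = 0 then GW.a else letterAt l (v2 ((n + 1) / 2)) := by
  have h : n < 2 ^ n := Nat.lt_two_pow_self
  have h2 : 2 ^ (n + 2) = 4 * 2 ^ n := by ring
  exact gword_getD l (n + 1) n (by omega)

private lemma etaG_even (l : ℕ → ℕ) (i : ℕ) : etaG l (2 * i) = GW.a := by
  rw [etaG_eq]; simp [Nat.mul_mod_right]

private lemma etaG_odd (l : ℕ → ℕ) (i : ℕ) :
    etaG l (2 * i + 1) = letterAt l (v2 (i + 1)) := by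
  rw [etaG_eq, if_neg (by omega)]
  have : (2 * i + 1 + 1) / 2 = i + 1 := by omega
  rw [this]

/-! ### Auxiliary: the words `(ax)^m` and factor machinery -/

private def gax : ℕ → GW := fun n => if n % 2 = 0 then GW.a else GW.x

private def Fax (m : ℕ) : List GW := (List.replicate m [GW.a, GW.x]).flatten

private lemma Fax_add (m n : ℕ) : Fax (m + n) = Fax m ++ Fax n := by
  unfold Fax
  rw [List.replicate_add, List.flatten_append]

private lemma Fax_eq_map (m : ℕ) : Fax m = (List.range (2 * m)).map gax := by
  induction m with
  | zero => simp [Fax]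
  | succ m ih =>
    have e1 : m + 1 = m + 1 := rfl
    have : Fax (m + 1) = Fax m ++ [GW.a, GW.x] := by
      rw [Fax_add]
      simp [Fax]
    rw [this, ih]
    have e2 : 2 * (m + 1) = (2 * m + 1) + 1 := by ring
    rw [e2, List.range_succ, List.range_succ, List.map_append, List.map_append]
    have g1 : gax (2 * m) = GW.a := by
      have : (2 * m) % 2 = 0 := by omega
      simp [gax, this]
    have g2 : gax (2 * m + 1) = GW.x := by
      have : (2 * m + 1) % 2 = 1 := by omega
      simp [gax, this]
    simp [g1, g2]

private lemma Fax_length (m : ℕ) : (Fax m).length = 2 * m := by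
  rw [Fax_eq_map]; simp

private lemma map_range_eq_iff {A : Type*} {N : ℕ} {f g : ℕ → A}
    (h : (List.range N).map f = (List.range N).map g) : ∀ i < N, f i = g i := by
  intro i hi
  have h1 : ((List.range N).map f)[i]'(by simpa using hi)
      = ((List.range N).map g)[i]'(by simpa using hi) := by
    simp only [h]
  simpa using h1

private lemma map_range_congr {A : Type*} {N : ℕ} {f g : ℕ → A}
    (h : ∀ i < N, f i = g i) : (List.range N).map f = (List.range N).map g := by
  apply List.map_congr_left
  intro i hi
  exact h i (List.mem_range.mp hi)

private lemma mem_LangG_iff {l : ℕ → ℕ} {m : ℕ} (w : List GW) (hw : w.length = m) :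
    w ∈ LangG l ↔ ∃ s, w = (List.range m).map fun i => etaG l (s + i) := by
  subst hw
  rfl

private lemma prefix_mem_LangG {l : ℕ → ℕ} {u w : List GW} (hp : u <+: w)
    (hw : w ∈ LangG l) : u ∈ LangG l := by
  obtain ⟨s, hs⟩ := hw
  refine ⟨s, ?_⟩
  have hu : u = w.take u.length := (List.prefix_iff_eq_take.mp hp)
  have hlen : u.length ≤ w.length := hp.length_le
  calc u = w.take u.length := hu
    _ = ((List.range w.length).map fun i => etaG l (s + i)).take u.length := by rw [← hs]
    _ = ((List.range w.length).take u.length).map fun i => etaG l (s + i) := by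
        rw [List.map_take]
    _ = (List.range u.length).map fun i => etaG l (s + i) := by
        rw [List.take_range, Nat.min_eq_left hlen]

/-- Lower bound: `(ax)^(2^(l0+1)-1)` occurs in `η`. -/
private lemma Fax_max_mem {l : ℕ → ℕ} (hl : ∀ i, 0 < l i) :
    Fax (2 ^ (l 0 + 1) - 1) ∈ LangG l := by
  set L0 := l 0 with hL0
  set M := 2 ^ (L0 + 1) - 1 with hM
  set j0 := l 0 + l 1 + l 2 with hj0
  have hj0ge : L0 + 2 ≤ j0 := by have := hl 1; have := hl 2; omega
  have hPow : (2:ℕ) ^ (L0 + 1) = 2 * 2 ^ L0 := by rw [pow_succ]; ring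
  have hP0 : 0 < (2:ℕ) ^ L0 := pow_pos two_pos _
  have hNP : (2:ℕ) ^ L0 < 2 ^ j0 := Nat.pow_lt_pow_right one_lt_two (by omega)
  set u := 2 ^ j0 - 2 ^ L0 with hu
  rw [mem_LangG_iff (Fax M) (Fax_length M)]
  refine ⟨2 * u, ?_⟩
  rw [Fax_eq_map]
  apply map_range_congr
  intro n hn
  rcases Nat.even_or_odd n with he | ho
  · obtain ⟨i, hi⟩ := he
    have : n = 2 * i := by omega
    subst this
    have : 2 * u + 2 * i = 2 * (u + i) := by ring
    rw [this, etaG_even]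
    have : (2 * i) % 2 = 0 := by omega
    simp [gax, this]
  · obtain ⟨i, hi⟩ := ho
    subst hi
    have hiM : i < M := by omega
    have : 2 * u + (2 * i + 1) = 2 * (u + i) + 1 := by ring
    rw [this, etaG_odd]
    have hgx : gax (2 * i + 1) = GW.x := by
      have : (2 * i + 1) % 2 = 1 := by omega
      simp [gax, this]
    rw [hgx]
    -- t' = u + i + 1 ranges over (2^j0 - 2^L0, 2^j0 + 2^L0)
    set t := u + i + 1 with ht
    have htlb : 2 ^ j0 - 2 ^ L0 < t := by omega
    have htub : t < 2 ^ j0 + 2 ^ L0 := by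
      have : i + 1 ≤ M := hiM
      omega
    rcases lt_trichotomy t (2 ^ j0) with hlt | heq | hgt
    · have hd : t = 2 ^ j0 - (2 ^ j0 - t) := by omega
      have hd1 : 0 < 2 ^ j0 - t := by omega
      have hd2 : 2 ^ j0 - t < 2 ^ L0 := by omega
      rw [hd, v2_pow_sub hd1 (by omega)]
      exact (letterAt_of_lt (v2_lt_of_lt_pow hd1 hd2)).symm
    · rw [heq, v2_pow_self]
      exact (letterAt_j0 hl).symm
    · have hd : t = 2 ^ j0 + (t - 2 ^ j0) := by omega
      have hd1 : 0 < t - 2 ^ j0 := by omega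
      have hd2 : t - 2 ^ j0 < 2 ^ L0 := by omega
      rw [hd, v2_pow_add hd1 (by omega)]
      exact (letterAt_of_lt (v2_lt_of_lt_pow hd1 hd2)).symm

private lemma Fax_mem_of_le {l : ℕ → ℕ} (hl : ∀ i, 0 < l i) {m : ℕ}
    (h : m ≤ 2 ^ (l 0 + 1) - 1) : Fax m ∈ LangG l := by
  refine prefix_mem_LangG ?_ (Fax_max_mem hl)
  refine ⟨Fax (2 ^ (l 0 + 1) - 1 - m), ?_⟩
  rw [← Fax_add]
  congr 1
  omega

/-- Upper bound: if `(ax)^m` occurs in `η` then `m ≤ 2^(l0+1)-1`. -/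
private lemma le_of_Fax_mem {l : ℕ → ℕ} (hl : ∀ i, 0 < l i) {m : ℕ}
    (hmem : Fax m ∈ LangG l) : m ≤ 2 ^ (l 0 + 1) - 1 := by
  by_contra hcon
  set L0 := l 0 with hL0
  set P := 2 ^ (L0 + 1) with hP
  have hPpos : 0 < P := pow_pos two_pos _
  have hPow : P = 2 * 2 ^ L0 := by rw [hP, pow_succ]; ring
  have hP0 : 0 < (2:ℕ) ^ L0 := pow_pos two_pos _
  have hmge : P ≤ m := by omega
  rw [mem_LangG_iff (Fax m) (Fax_length m)] at hmem
  obtain ⟨s, hs⟩ := hmem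
  rw [Fax_eq_map] at hs
  have hpt : ∀ i < 2 * m, gax i = etaG l (s + i) := map_range_eq_iff hs
  -- s is even
  have hseven : s % 2 = 0 := by
    by_contra hso
    have h0 : gax 0 = etaG l (s + 0) := hpt 0 (by omega)
    obtain ⟨c, hc⟩ : ∃ c, s = 2 * c + 1 := ⟨s / 2, by omega⟩
    rw [hc] at h0
    simp only [Nat.add_zero] at h0
    rw [etaG_odd] at h0
    exact letterAt_ne_a _ (by simpa [gax] using h0.symm)
  obtain ⟨uu, huu⟩ : ∃ uu, s = 2 * uu := ⟨s / 2, by omega⟩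
  -- find t ≡ 2^L0 (mod P) in the window [uu+1, uu+m]
  set b := (uu + 1) % P with hb
  have hbP : b < P := Nat.mod_lt _ hPpos
  set d := (2 ^ L0 + P - b) % P with hd
  have hdP : d < P := Nat.mod_lt _ hPpos
  set t := uu + 1 + d with ht
  have htmod : t % P = 2 ^ L0 := by
    calc t % P = (uu + 1 + (2 ^ L0 + P - b)) % P := by rw [ht, hd, Nat.add_mod_mod]
      _ = (b + (2 ^ L0 + P - b)) % P := (Nat.mod_add_mod (uu + 1) P _).symm
      _ = (2 ^ L0 + P) % P := by congr 1; omega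
      _ = 2 ^ L0 % P := by rw [Nat.add_mod_right]
      _ = 2 ^ L0 := Nat.mod_eq_of_lt (by omega)
  have hv2t : v2 t = L0 := by
    have hq := Nat.div_add_mod t P
    rw [htmod] at hq
    set q := t / P with hqd
    have : t = 2 ^ L0 * (2 * q + 1) := by rw [← hq, hPow]; ring
    rw [this, v2_pow_mul_odd]
  -- position 2*(t - uu - 1) + 1 in the factor
  set i := d with hi
  have hieq : uu + i + 1 = t := by omega
  have hilt : i < m := by omega
  have hn : 2 * i + 1 < 2 * m := by omega
  have hx : gax (2 * i + 1) = etaG l (s + (2 * i + 1)) := hpt _ hn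
  have : s + (2 * i + 1) = 2 * (uu + i) + 1 := by omega
  rw [this, etaG_odd, hieq, hv2t, letterAt_l0 hl] at hx
  have hgx : gax (2 * i + 1) = GW.x := by
    have : (2 * i + 1) % 2 = 1 := by omega
    simp [gax, this]
  rw [hgx] at hx
  exact absurd hx (by simp)

private lemma Fax_flatten_replicate (p h : ℕ) :
    (List.replicate p (Fax h)).flatten = Fax (p * h) := by
  induction p with
  | zero => simp [Fax]
  | succ p ih =>
    rw [List.replicate_succ, List.flatten_cons, ih, ← Fax_add]
    congr 1
    ring

/-- if `k ≡ 2 (mod 4)` and `η|_k η|_k ∈ L(η)`, then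
`η|_k = (a,x)^(k/2)` and `Q(η|_k) = ⌊(2^(l₁+2) - 2)/k⌋`. -/
theorem Q_prefix_two_mod_four (l : ℕ → ℕ) (hl : ∀ i, 0 < l i) (k : ℕ)
    (hk : k % 4 = 2) (hsq : prefEta l k ++ prefEta l k ∈ LangG l) :
    prefEta l k = (List.replicate (k / 2) [GW.a, GW.x]).flatten ∧
    IsGreatest {p : ℕ | (List.replicate p (prefEta l k)).flatten ∈ LangG l}
      ((2 ^ (l 0 + 2) - 2) / k) := by
  -- abbreviations
  have hk2 : k % 2 = 0 := by omega
  have hkpos : 0 < k := by omega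
  set η := etaG l with hη
  -- unpack the hypothesis
  have hwlen : (prefEta l k).length = k := by simp [prefEta]
  have hsq' : prefEta l k ++ prefEta l k ∈ LangG l := hsq
  rw [mem_LangG_iff _ (by simp [hwlen] : (prefEta l k ++ prefEta l k).length = k + k)] at hsq'
  obtain ⟨s, hs⟩ := hsq'
  have happ : prefEta l k ++ prefEta l k
      = (List.range k).map (etaG l) ++ (List.range k).map (etaG l) := rfl
  rw [happ] at hs
  have hs2 : ((List.range k).map (etaG l) ++ (List.range k).map (etaG l))
      = (List.range (k + k)).map (fun i => etaG l (s + i)) := hs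
  -- pointwise consequences
  have hpt : ∀ i (hi : i < k + k),
      (((List.range k).map (etaG l) ++ (List.range k).map (etaG l))[i]'(by simpa using hi))
      = etaG l (s + i) := by
    intro i hi
    rw [List.getElem_of_eq hs2 (by simpa using hi)]
    simp
  have h1 : ∀ i, i < k → etaG l (s + i) = etaG l i := by
    intro i hi
    have := hpt i (by omega)
    rw [List.getElem_append_left (by simpa using hi)] at this
    simpa using this.symm
  have h2 : ∀ i, i < k → etaG l (s + (k + i)) = etaG l i := by
    intro i hi
    have := hpt (k + i) (by omega)
    rw [List.getElem_append_right (by simp)] at this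
    simp only [List.length_map, List.length_range] at this
    rw [List.getElem_map] at this
    simp only [List.getElem_range] at this
    have e : k + i - k = i := by omega
    rw [e] at this
    exact this.symm
  -- s is even
  have hseven : s % 2 = 0 := by
    by_contra hso
    have h0 := h1 0 (by omega)
    simp only [Nat.add_zero] at h0
    obtain ⟨c, hc⟩ : ∃ c, s = 2 * c + 1 := ⟨s / 2, by omega⟩
    have he0 : etaG l 0 = GW.a := by simpa using etaG_even l 0
    rw [hc, etaG_odd, he0] at h0
    exact letterAt_ne_a _ h0
  -- all odd positions below k carry x
  have hx : ∀ i, 2 * i + 1 < k → etaG l (2 * i + 1) = GW.x := by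
    intro i hi
    have key : ∀ p, p % 4 = 1 → etaG l p = GW.x := by
      intro p hp
      obtain ⟨q, hq⟩ : ∃ q, p = 2 * (2 * q) + 1 := ⟨p / 4, by omega⟩
      rw [hq, etaG_odd, v2_odd (by omega)]
      exact letterAt_of_lt (hl 0)
    rcases Nat.lt_or_ge ((s + (2 * i + 1)) % 4) 2 with hc | hc
    · have hm : (s + (2 * i + 1)) % 4 = 1 := by omega
      rw [← h1 _ hi, key _ hm]
    · have hm : (s + (k + (2 * i + 1))) % 4 = 1 := by omega
      rw [← h2 _ hi, key _ hm]
  -- Part 1 : the prefix is (ax)^(k/2)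
  have hpart1 : prefEta l k = Fax (k / 2) := by
    rw [Fax_eq_map]
    have e : 2 * (k / 2) = k := by omega
    rw [e]
    apply map_range_congr
    intro n hn
    rcases Nat.even_or_odd n with he | ho
    · obtain ⟨j, hj⟩ := he
      have : n = 2 * j := by omega
      rw [this, etaG_even]
      have hmod : (2 * j) % 2 = 0 := by omega
      simp [gax, hmod]
    · obtain ⟨j, hj⟩ := ho
      rw [hj, hx j (by omega)]
      have hmod : (2 * j + 1) % 2 = 1 := by omega
      simp [gax, hmod]
  have hFax : (List.replicate (k / 2) [GW.a, GW.x]).flatten = Fax (k / 2) := rfl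
  refine ⟨by rw [hpart1, hFax], ?_⟩
  -- Part 2 : the maximal power
  set M := 2 ^ (l 0 + 1) - 1 with hM
  have hPpos : (1:ℕ) ≤ 2 ^ (l 0 + 1) := Nat.one_le_two_pow
  have h2M : 2 ^ (l 0 + 2) - 2 = 2 * M := by
    have : (2:ℕ) ^ (l 0 + 2) = 2 * 2 ^ (l 0 + 1) := by rw [pow_succ]; ring
    omega
  have hmemS : ∀ p : ℕ, (List.replicate p (prefEta l k)).flatten ∈ LangG l
      ↔ Fax (p * (k / 2)) ∈ LangG l := by
    intro p
    rw [hpart1, Fax_flatten_replicate]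
  constructor
  · -- membership
    rw [Set.mem_setOf_eq, hmemS]
    apply Fax_mem_of_le hl
    have hd : (2 ^ (l 0 + 2) - 2) / k * k ≤ 2 ^ (l 0 + 2) - 2 := Nat.div_mul_le_self _ _
    have hk2h : k = 2 * (k / 2) := by omega
    have he : (2 ^ (l 0 + 2) - 2) / k * k
        = 2 * ((2 ^ (l 0 + 2) - 2) / k * (k / 2)) := by
      calc (2 ^ (l 0 + 2) - 2) / k * k
          = (2 ^ (l 0 + 2) - 2) / k * (2 * (k / 2)) := by rw [← hk2h]
        _ = 2 * ((2 ^ (l 0 + 2) - 2) / k * (k / 2)) := by ring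
    omega
  · -- upper bound
    intro p hp
    rw [Set.mem_setOf_eq, hmemS] at hp
    have hle : p * (k / 2) ≤ M := by
      have := le_of_Fax_mem hl hp
      omega
    rw [Nat.le_div_iff_mul_le hkpos, h2M]
    have hk2h : k = 2 * (k / 2) := by omega
    have he : p * k = 2 * (p * (k / 2)) := by
      calc p * k = p * (2 * (k / 2)) := by rw [← hk2h]
        _ = 2 * (p * (k / 2)) := by ring
    omega
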